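/- Let D=(x₀,x₁)×(t₀,t₁)⊂ℝ² be a space–time rectangle, ε, μ > 0 constants, c := (εμ)^{−1/2}, j∈ℕ, and p∈ℕ. Let u₀ ∈ C^j on the closure of Ω_D⁻=(x₀−ct₁, x₁−ct₀) and w₀ ∈ C^j on the closure of Ω_D⁺=(x₀+ct₀, x₁+ct₁), and define E(x,t) := (u₀(x−ct)+w₀(x+ct))/(2ε^{1/2}) and H(x,t) := (u₀(x−ct)−w₀(x+ct))/(2μ^{1/2}) on D. Let Φ⁻={φ₀⁻,…,φ_p⁻} and Φ⁺={φ₀⁺,…,φ_p⁺} be sets of p+1 functions of class C^j on the closures of Ω_D⁻ and Ω_D⁺ respectively, and let V_p(D) be the linear span of the pairs (φ_k⁻(x−ct)/(2ε^{1/2}), φ_k⁻(x−ct)/(2μ^{1/2})) and (φ_k⁺(x+ct)/(2ε^{1/2}), −φ_k⁺(x+ct)/(2μ^{1/2})), k=0,…,p. Then inf_{(v_E,v_H)∈V_p(D)} ( |ε^{1/2}(E−v_E)|²_{H^j_c(D)} + |μ^{1/2}(H−v_H)|²_{H^j_c(D)} ) ≤ (j+1) · min{ t₁−t₀ , (x₁−x₀)/c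 } · ( inf_{P ∈ span Φ⁻} |u₀−P|²_{H^j(Ω_D⁻)} + inf_{P ∈ span Φ⁺} |w₀−P|²_{H^j(Ω_D⁺)} ). -/

import Mathlib

set_option maxHeartbeats 1000000


open MeasureTheory Set

/-- Partial derivative in the space variable. -/
noncomputable def pdX (v : ℝ → ℝ → ℝ) : ℝ → ℝ → ℝ := fun x t => deriv (fun y => v y t) x

/-- Partial derivative in the time variable. -/
noncomputable def pdT (v : ℝ → ℝ → ℝ) : ℝ → ℝ → ℝ := fun x t => deriv (fun s => v x s) t

/-- Anisotropic derivative `D_c^α v = c^{-α_t} ∂_x^{α_x} ∂_t^{α_t} v`. -/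
noncomputable def Dc (c : ℝ) (ax at' : ℕ) (v : ℝ → ℝ → ℝ) : ℝ → ℝ → ℝ :=
  fun x t => (c ^ at')⁻¹ * (pdX^[ax] (pdT^[at'] v)) x t

/-- The seminorm `|v|_{W^{j,∞}_c(D)}` on the rectangle `D = (x₀,x₁)×(t₀,t₁)`:
the sup over multi-indices `α` with `|α| = j` of the sup norm of `D_c^α v` on `D`. -/
noncomputable def WinfC (c : ℝ) (j : ℕ) (v : ℝ → ℝ → ℝ) (x₀ x₁ t₀ t₁ : ℝ) : ℝ :=
  sSup {r : ℝ | ∃ ax at' : ℕ, ax + at' = j ∧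
    ∃ x ∈ Set.Ioo x₀ x₁, ∃ t ∈ Set.Ioo t₀ t₁, r = |Dc c ax at' v x t|}

/-- The seminorm `|u|_{W^{j,∞}(a,b)}`: the sup norm of the `j`-th derivative on `(a,b)`. -/
noncomputable def Winf1 (j : ℕ) (u : ℝ → ℝ) (a b : ℝ) : ℝ :=
  sSup {r : ℝ | ∃ z ∈ Set.Ioo a b, r = |iteratedDeriv j u z|}
/-- The squared seminorm `|v|²_{H^j_c(D)} = Σ_{|α|=j} ‖D_c^α v‖²_{L²(D)}`
on the rectangle `D = (x₀,x₁)×(t₀,t₁)`. -/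
noncomputable def HjCsq (c : ℝ) (j : ℕ) (v : ℝ → ℝ → ℝ) (x₀ x₁ t₀ t₁ : ℝ) : ℝ :=
  ∑ k ∈ Finset.range (j + 1), ∫ x in x₀..x₁, ∫ t in t₀..t₁, (Dc c (j - k) k v x t) ^ 2

lemma itws_open {k : ℕ} {A B : ℝ} (f : ℝ → ℝ) {z : ℝ} (hz : z ∈ Set.Ioo A B) :
    iteratedDerivWithin k f (Set.Ioo A B) z = iteratedDeriv k f z := by
  rw [iteratedDerivWithin, iteratedDeriv, iteratedFDerivWithin_of_isOpen k isOpen_Ioo hz]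

lemma itws {k : ℕ} {A B : ℝ} (f : ℝ → ℝ) {z : ℝ} (hz : z ∈ Set.Ioo A B) :
    iteratedDerivWithin k f (Set.Icc A B) z = iteratedDeriv k f z := by
  have h1 : iteratedFDerivWithin ℝ k f (Set.Icc A B ∩ Set.Ioo A B) z
      = iteratedFDerivWithin ℝ k f (Set.Icc A B) z :=
    iteratedFDerivWithin_inter_open isOpen_Ioo hz
  have h2 : Set.Icc A B ∩ Set.Ioo A B = Set.Ioo A B :=
    Set.inter_eq_self_of_subset_right Set.Ioo_subset_Icc_self
  rw [iteratedDerivWithin, iteratedDeriv, ← h1, h2,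
    iteratedFDerivWithin_of_isOpen k isOpen_Ioo hz]

lemma hasDeriv_itd {j k : ℕ} {A B : ℝ} {f : ℝ → ℝ}
    (hf : ContDiffOn ℝ j f (Set.Icc A B)) (hk : k < j) {z : ℝ} (hz : z ∈ Set.Ioo A B) :
    HasDerivAt (iteratedDeriv k f) (iteratedDeriv (k + 1) f z) z := by
  have hs : IsOpen (Set.Ioo A B) := isOpen_Ioo
  have hf' : ContDiffOn ℝ j f (Set.Ioo A B) := hf.mono Set.Ioo_subset_Icc_self
  have hd : DifferentiableOn ℝ (iteratedDerivWithin k f (Set.Ioo A B)) (Set.Ioo A B) :=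
    hf'.differentiableOn_iteratedDerivWithin (by exact_mod_cast hk) hs.uniqueDiffOn
  have hzs : Set.Ioo A B ∈ nhds z := hs.mem_nhds hz
  have hda : DifferentiableAt ℝ (iteratedDerivWithin k f (Set.Ioo A B)) z :=
    (hd z hz).differentiableAt hzs
  have heq : iteratedDeriv k f =ᶠ[nhds z] iteratedDerivWithin k f (Set.Ioo A B) :=
    Filter.eventuallyEq_of_mem hzs (fun w hw => (itws_open f hw).symm)
  have hval : deriv (iteratedDerivWithin k f (Set.Ioo A B)) z = iteratedDeriv (k + 1) f z := by
    rw [← derivWithin_of_isOpen hs hz, ← iteratedDerivWithin_succ]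
    exact itws_open f hz
  have h := hda.hasDerivAt
  rw [hval] at h
  exact h.congr_of_eventuallyEq heq

lemma dk_formula {x₀ x₁ t₀ t₁ c : ℝ} (hx : x₀ < x₁) (ht : t₀ < t₁) (hc : 0 < c)
    {j : ℕ} {g h : ℝ → ℝ}
    (hg : ContDiffOn ℝ j g (Set.Icc (x₀ - c * t₁) (x₁ - c * t₀)))
    (hh : ContDiffOn ℝ j h (Set.Icc (x₀ + c * t₀) (x₁ + c * t₁)))
    (α β : ℝ) :
    ∀ a b : ℕ, a + b ≤ j → ∀ x ∈ Set.Ioo x₀ x₁, ∀ t ∈ Set.Ioo t₀ t₁,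
      pdX^[a] (pdT^[b] (fun x t => α * g (x - c * t) + β * h (x + c * t))) x t
        = α * (-c) ^ b * iteratedDeriv (a + b) g (x - c * t)
          + β * c ^ b * iteratedDeriv (a + b) h (x + c * t) := by
  have hmem1 : ∀ x ∈ Set.Ioo x₀ x₁, ∀ t ∈ Set.Ioo t₀ t₁,
      x - c * t ∈ Set.Ioo (x₀ - c * t₁) (x₁ - c * t₀) := by
    intro x hx' t ht'
    constructor
    · nlinarith [hx'.1, ht'.2]
    · nlinarith [hx'.2, ht'.1]
  have hmem2 : ∀ x ∈ Set.Ioo x₀ x₁, ∀ t ∈ Set.Ioo t₀ t₁,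
      x + c * t ∈ Set.Ioo (x₀ + c * t₀) (x₁ + c * t₁) := by
    intro x hx' t ht'
    constructor
    · nlinarith [hx'.1, ht'.1]
    · nlinarith [hx'.2, ht'.2]
  set K : ℝ → ℝ → ℝ := fun x t => α * g (x - c * t) + β * h (x + c * t) with hK
  have Hb : ∀ b : ℕ, b ≤ j → ∀ x ∈ Set.Ioo x₀ x₁, ∀ t ∈ Set.Ioo t₀ t₁,
      pdT^[b] K x t = α * (-c) ^ b * iteratedDeriv b g (x - c * t)
        + β * c ^ b * iteratedDeriv b h (x + c * t) := by
    intro b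
    induction b with
    | zero => intro _ x hx' t ht'; simp [hK]
    | succ b ih =>
      intro hb x hx' t ht'
      have hb' : b ≤ j := (Nat.lt_of_succ_le hb).le
      rw [Function.iterate_succ_apply']
      show deriv (fun τ => pdT^[b] K x τ) t = _
      have hev : (fun τ => pdT^[b] K x τ) =ᶠ[nhds t]
          (fun τ => α * (-c) ^ b * iteratedDeriv b g (x - c * τ)
            + β * c ^ b * iteratedDeriv b h (x + c * τ)) :=
        Filter.eventually_of_mem (isOpen_Ioo.mem_nhds ht')
          (fun τ hτ => ih hb' x hx' τ hτ)
      rw [hev.deriv_eq]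
      have hin1 : HasDerivAt (fun τ : ℝ => x - c * τ) (-c) t := by
        exact (((hasDerivAt_id t).const_mul c).const_sub x).congr_deriv (by ring)
      have hin2 : HasDerivAt (fun τ : ℝ => x + c * τ) c t := by
        simpa using ((hasDerivAt_id t).const_mul c).const_add x
      have hg1 : HasDerivAt (fun τ => iteratedDeriv b g (x - c * τ))
          (iteratedDeriv (b + 1) g (x - c * t) * (-c)) t := by
        have := (hasDeriv_itd hg (Nat.lt_of_succ_le hb) (hmem1 x hx' t ht')).comp t hin1
        simpa [Function.comp_def] using this
      have hh1 : HasDerivAt (fun τ => iteratedDeriv b h (x + c * τ))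
          (iteratedDeriv (b + 1) h (x + c * t) * c) t := by
        have := (hasDeriv_itd hh (Nat.lt_of_succ_le hb) (hmem2 x hx' t ht')).comp t hin2
        simpa [Function.comp_def] using this
      have hsum := (hg1.const_mul (α * (-c) ^ b)).add (hh1.const_mul (β * c ^ b))
      erw [hsum.deriv]
      ring
  intro a
  induction a with
  | zero => intro b hb x hx' t ht'; simpa using Hb b (by omega) x hx' t ht'
  | succ a ih =>
    intro b hb x hx' t ht'
    have hb' : a + b ≤ j := by omega
    rw [Function.iterate_succ_apply']
    show deriv (fun y => pdX^[a] (pdT^[b] K) y t) x = _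
    have hev : (fun y => pdX^[a] (pdT^[b] K) y t) =ᶠ[nhds x]
        (fun y => α * (-c) ^ b * iteratedDeriv (a + b) g (y - c * t)
          + β * c ^ b * iteratedDeriv (a + b) h (y + c * t)) :=
      Filter.eventually_of_mem (isOpen_Ioo.mem_nhds hx')
        (fun y hy => ih b hb' y hy t ht')
    rw [hev.deriv_eq]
    have hin1 : HasDerivAt (fun y : ℝ => y - c * t) 1 x := by
      simpa using (hasDerivAt_id x).sub_const (c * t)
    have hin2 : HasDerivAt (fun y : ℝ => y + c * t) 1 x := by
      simpa using (hasDerivAt_id x).add_const (c * t)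
    have hg1 : HasDerivAt (fun y => iteratedDeriv (a + b) g (y - c * t))
        (iteratedDeriv (a + b + 1) g (x - c * t) * 1) x := by
      have := (hasDeriv_itd hg (by omega : a + b < j) (hmem1 x hx' t ht')).comp x hin1
      simpa [Function.comp_def] using this
    have hh1 : HasDerivAt (fun y => iteratedDeriv (a + b) h (y + c * t))
        (iteratedDeriv (a + b + 1) h (x + c * t) * 1) x := by
      have := (hasDeriv_itd hh (by omega : a + b < j) (hmem2 x hx' t ht')).comp x hin2
      simpa [Function.comp_def] using this
    have hsum := (hg1.const_mul (α * (-c) ^ b)).add (hh1.const_mul (β * c ^ b))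
    erw [hsum.deriv]
    have e1 : a + 1 + b = a + b + 1 := by omega
    rw [e1]
    ring

lemma ioo_int (f : ℝ → ℝ) {a b : ℝ} (hab : a ≤ b) :
    ∫ z in Set.Ioo a b, f z = ∫ z in a..b, f z := by
  rw [intervalIntegral.integral_of_le hab, Measure.restrict_congr_set Ioo_ae_eq_Ioc]

lemma int_shift_bound {x₀ x₁ t₀ t₁ A B s : ℝ} (hx : x₀ ≤ x₁) (ht : t₀ ≤ t₁)
    (hs : s ≠ 0) (G : ℝ → ℝ) (hG : Continuous G) (h0 : ∀ z, 0 ≤ G z)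
    (hr : ∀ x ∈ Set.Icc x₀ x₁, ∀ t ∈ Set.Icc t₀ t₁, x + s * t ∈ Set.Icc A B) :
    (∫ x in Set.Ioo x₀ x₁, (∫ t in Set.Ioo t₀ t₁, G (x + s * t)))
      ≤ min (t₁ - t₀) ((x₁ - x₀) / |s|) * ∫ z in A..B, G z := by
  have hmemx₀ : x₀ ∈ Set.Icc x₀ x₁ := ⟨le_refl _, hx⟩
  have hmemt₀ : t₀ ∈ Set.Icc t₀ t₁ := ⟨le_refl _, ht⟩
  have hAB : A ≤ B := Set.nonempty_Icc.1 ⟨_, hr x₀ hmemx₀ t₀ hmemt₀⟩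
  set J := ∫ z in A..B, G z with hJdef
  have intg : ∀ a b : ℝ, IntervalIntegrable G volume a b :=
    fun a b => hG.intervalIntegrable a b
  have hJ0 : 0 ≤ J := intervalIntegral.integral_nonneg hAB (fun u _ => h0 u)
  -- subinterval bound
  have SUB : ∀ a' b' : ℝ, A ≤ a' → a' ≤ b' → b' ≤ B → (∫ z in a'..b', G z) ≤ J := by
    intro a' b' h1 h2 h3
    have e1 : (∫ z in A..a', G z) + (∫ z in a'..B, G z) = J :=
      intervalIntegral.integral_add_adjacent_intervals (intg _ _) (intg _ _)
    have e2 : (∫ z in a'..b', G z) + (∫ z in b'..B, G z) = ∫ z in a'..B, G z :=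
      intervalIntegral.integral_add_adjacent_intervals (intg _ _) (intg _ _)
    have n1 : 0 ≤ ∫ z in A..a', G z :=
      intervalIntegral.integral_nonneg h1 (fun u _ => h0 u)
    have n2 : 0 ≤ ∫ z in b'..B, G z :=
      intervalIntegral.integral_nonneg h3 (fun u _ => h0 u)
    linarith
  -- primitive
  set Fp : ℝ → ℝ := fun y => ∫ z in A..y, G z with hFp
  have hFpc : Continuous Fp := intervalIntegral.continuous_primitive intg A
  have hFpdiff : ∀ a' b' : ℝ, Fp b' - Fp a' = ∫ z in a'..b', G z := by
    intro a' b'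
    exact intervalIntegral.integral_interval_sub_left (intg _ _) (intg _ _)
  -- inner integral rewrite
  have hinner : ∀ x : ℝ, (∫ t in Set.Ioo t₀ t₁, G (x + s * t))
      = s⁻¹ * (Fp (s * t₁ + x) - Fp (s * t₀ + x)) := by
    intro x
    rw [ioo_int _ ht]
    have e : (fun t => G (x + s * t)) = fun t => G (s * t + x) := by
      ext τ; ring_nf
    rw [e, intervalIntegral.integral_comp_mul_add G hs x, smul_eq_mul, hFpdiff]
  have houter : (∫ x in Set.Ioo x₀ x₁, (∫ t in Set.Ioo t₀ t₁, G (x + s * t)))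
      = ∫ x in x₀..x₁, s⁻¹ * (Fp (s * t₁ + x) - Fp (s * t₀ + x)) := by
    rw [show (fun x => ∫ t in Set.Ioo t₀ t₁, G (x + s * t))
      = fun x => s⁻¹ * (Fp (s * t₁ + x) - Fp (s * t₀ + x)) from funext hinner] at *
    exact ioo_int _ hx
  rw [houter]
  -- pointwise bounds on the integrands
  have hphi : ∀ x ∈ Set.Icc x₀ x₁,
      0 ≤ s⁻¹ * (Fp (s * t₁ + x) - Fp (s * t₀ + x)) ∧
      s⁻¹ * (Fp (s * t₁ + x) - Fp (s * t₀ + x)) ≤ |s|⁻¹ * J := by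
    intro x hxm
    have m0 : A ≤ s * t₀ + x ∧ s * t₀ + x ≤ B := by
      have := hr x hxm t₀ hmemt₀; constructor <;> [linarith [this.1]; linarith [this.2]]
    have m1 : A ≤ s * t₁ + x ∧ s * t₁ + x ≤ B := by
      have := hr x hxm t₁ ⟨ht, le_refl _⟩
      constructor <;> [linarith [this.1]; linarith [this.2]]
    rcases lt_or_gt_of_ne hs with hneg | hpos
    · -- s < 0 : s*t₁+x ≤ s*t₀+x
      have hord : s * t₁ + x ≤ s * t₀ + x := by nlinarith
      have hflip : Fp (s * t₁ + x) - Fp (s * t₀ + x)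
          = -(∫ z in s * t₁ + x..s * t₀ + x, G z) := by
        rw [← hFpdiff]; ring
      have hβ : 0 ≤ ∫ z in s * t₁ + x..s * t₀ + x, G z :=
        intervalIntegral.integral_nonneg hord (fun u _ => h0 u)
      have hβ' : (∫ z in s * t₁ + x..s * t₀ + x, G z) ≤ J := SUB _ _ m1.1 hord m0.2
      have habs : |s| = -s := abs_of_neg hneg
      have hsinv : s⁻¹ < 0 := inv_lt_zero.mpr hneg
      constructor
      · rw [hflip]
        nlinarith
      · rw [hflip, habs]
        have h1 : s⁻¹ * -(∫ z in s * t₁ + x..s * t₀ + x, G z)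
            = (-s)⁻¹ * (∫ z in s * t₁ + x..s * t₀ + x, G z) := by
          rw [inv_neg]; ring
        rw [h1]
        have h2 : (0:ℝ) < (-s)⁻¹ := inv_pos.mpr (by linarith)
        nlinarith
    · -- s > 0
      have hord : s * t₀ + x ≤ s * t₁ + x := by nlinarith
      have hβ : 0 ≤ ∫ z in s * t₀ + x..s * t₁ + x, G z :=
        intervalIntegral.integral_nonneg hord (fun u _ => h0 u)
      have hβ' : (∫ z in s * t₀ + x..s * t₁ + x, G z) ≤ J := SUB _ _ m0.1 hord m1.2
      have habs : |s| = s := abs_of_pos hpos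
      rw [hFpdiff (s * t₀ + x) (s * t₁ + x), habs]
      have h2 : (0:ℝ) < s⁻¹ := by positivity
      constructor
      · nlinarith
      · nlinarith
  have hφcont : Continuous fun x => s⁻¹ * (Fp (s * t₁ + x) - Fp (s * t₀ + x)) :=
    continuous_const.mul ((hFpc.comp (continuous_const.add continuous_id)).sub
      (hFpc.comp (continuous_const.add continuous_id)))
  -- Bound 1 : by (x₁ - x₀)/|s| * J
  have bound1 : (∫ x in x₀..x₁, s⁻¹ * (Fp (s * t₁ + x) - Fp (s * t₀ + x)))
      ≤ (x₁ - x₀) / |s| * J := by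
    have := intervalIntegral.integral_mono_on (μ := volume)
      (f := fun x => s⁻¹ * (Fp (s * t₁ + x) - Fp (s * t₀ + x)))
      (g := fun _ => |s|⁻¹ * J) hx (hφcont.intervalIntegrable _ _)
      intervalIntegrable_const (fun x hxm => (hphi x hxm).2)
    rw [intervalIntegral.integral_const, smul_eq_mul] at this
    calc _ ≤ (x₁ - x₀) * (|s|⁻¹ * J) := this
      _ = (x₁ - x₀) / |s| * J := by ring
  -- Bound 2 : by (t₁ - t₀) * J, via exchanging the roles
  have intFp : ∀ a b : ℝ, IntervalIntegrable Fp volume a b :=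
    fun a b => hFpc.intervalIntegrable a b
  set Q : ℝ → ℝ := fun y => ∫ y' in (0:ℝ)..y, Fp y' with hQ
  have hQdiff : ∀ a b : ℝ, Q b - Q a = ∫ y in a..b, Fp y :=
    fun a b => intervalIntegral.integral_interval_sub_left (intFp _ _) (intFp _ _)
  have c1 : ∀ d : ℝ, Continuous fun x : ℝ => Fp (d + x) :=
    fun d => hFpc.comp (continuous_const.add continuous_id)
  have hL : (∫ x in x₀..x₁, s⁻¹ * (Fp (s * t₁ + x) - Fp (s * t₀ + x)))
      = s⁻¹ * ((Q (s * t₁ + x₁) - Q (s * t₁ + x₀)) - (Q (s * t₀ + x₁) - Q (s * t₀ + x₀))) := by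
    rw [intervalIntegral.integral_const_mul]
    congr 1
    rw [intervalIntegral.integral_sub
      ((c1 (s * t₁)).intervalIntegrable _ _) ((c1 (s * t₀)).intervalIntegrable _ _),
      intervalIntegral.integral_comp_add_left Fp (s * t₁),
      intervalIntegral.integral_comp_add_left Fp (s * t₀), ← hQdiff, ← hQdiff]
  have hR : (∫ τ in s * t₀..s * t₁, (Fp (x₁ + τ) - Fp (x₀ + τ)))
      = (Q (x₁ + s * t₁) - Q (x₁ + s * t₀)) - (Q (x₀ + s * t₁) - Q (x₀ + s * t₀)) := by
    rw [intervalIntegral.integral_sub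
      ((c1 x₁).intervalIntegrable _ _) ((c1 x₀).intervalIntegrable _ _),
      intervalIntegral.integral_comp_add_left Fp x₁,
      intervalIntegral.integral_comp_add_left Fp x₀, ← hQdiff, ← hQdiff]
  have hLR : (∫ x in x₀..x₁, s⁻¹ * (Fp (s * t₁ + x) - Fp (s * t₀ + x)))
      = s⁻¹ * ∫ τ in s * t₀..s * t₁, (Fp (x₁ + τ) - Fp (x₀ + τ)) := by
    rw [hL, hR, add_comm x₁ (s * t₁), add_comm x₁ (s * t₀), add_comm x₀ (s * t₁),
      add_comm x₀ (s * t₀)]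
    ring
  have hψ : ∀ τ, min (s * t₀) (s * t₁) ≤ τ → τ ≤ max (s * t₀) (s * t₁) →
      0 ≤ Fp (x₁ + τ) - Fp (x₀ + τ) ∧ Fp (x₁ + τ) - Fp (x₀ + τ) ≤ J := by
    intro τ hlow hhigh
    have h1 : A ≤ x₀ + s * t₀ := (hr x₀ hmemx₀ t₀ hmemt₀).1
    have h2 : A ≤ x₀ + s * t₁ := (hr x₀ hmemx₀ t₁ ⟨ht, le_refl _⟩).1
    have h3 : x₁ + s * t₀ ≤ B := (hr x₁ ⟨hx, le_refl _⟩ t₀ hmemt₀).2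
    have h4 : x₁ + s * t₁ ≤ B := (hr x₁ ⟨hx, le_refl _⟩ t₁ ⟨ht, le_refl _⟩).2
    have hA : A ≤ x₀ + τ := by
      rcases min_cases (s * t₀) (s * t₁) with ⟨hm, _⟩ | ⟨hm, _⟩ <;> rw [hm] at hlow <;> linarith
    have hB : x₁ + τ ≤ B := by
      rcases max_cases (s * t₀) (s * t₁) with ⟨hm, _⟩ | ⟨hm, _⟩ <;> rw [hm] at hhigh <;> linarith
    have hord : x₀ + τ ≤ x₁ + τ := by linarith
    rw [hFpdiff (x₀ + τ) (x₁ + τ)]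
    exact ⟨intervalIntegral.integral_nonneg hord (fun u _ => h0 u), SUB _ _ hA hord hB⟩
  have hψcont : Continuous fun τ => Fp (x₁ + τ) - Fp (x₀ + τ) :=
    (hFpc.comp (continuous_const.add continuous_id)).sub
      (hFpc.comp (continuous_const.add continuous_id))
  have bound2 : (∫ x in x₀..x₁, s⁻¹ * (Fp (s * t₁ + x) - Fp (s * t₀ + x)))
      ≤ (t₁ - t₀) * J := by
    rw [hLR]
    rcases lt_or_gt_of_ne hs with hneg | hpos
    · have hord : s * t₁ ≤ s * t₀ := by nlinarith
      have hmono : (∫ τ in s * t₁..s * t₀, (Fp (x₁ + τ) - Fp (x₀ + τ)))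
          ≤ (s * t₀ - s * t₁) * J := by
        have := intervalIntegral.integral_mono_on (μ := volume)
          (f := fun τ => Fp (x₁ + τ) - Fp (x₀ + τ))
          (g := fun _ => J) hord (hψcont.intervalIntegrable _ _) intervalIntegrable_const
          (fun τ hτ => (hψ τ (by rcases hτ with ⟨l, r⟩; simp; right; exact l)
            (by rcases hτ with ⟨l, r⟩; simp; left; exact r)).2)
        rwa [intervalIntegral.integral_const, smul_eq_mul] at this
      have hnn : 0 ≤ ∫ τ in s * t₁..s * t₀, (Fp (x₁ + τ) - Fp (x₀ + τ)) :=
        intervalIntegral.integral_nonneg hord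
          (fun τ hτ => (hψ τ (by rcases hτ with ⟨l, r⟩; simp; right; exact l)
            (by rcases hτ with ⟨l, r⟩; simp; left; exact r)).1)
      rw [intervalIntegral.integral_symm]
      have hsinv : (0:ℝ) < (-s)⁻¹ := inv_pos.mpr (by linarith)
      have e : s⁻¹ * -(∫ τ in s * t₁..s * t₀, (Fp (x₁ + τ) - Fp (x₀ + τ)))
          = (-s)⁻¹ * (∫ τ in s * t₁..s * t₀, (Fp (x₁ + τ) - Fp (x₀ + τ))) := by
        rw [inv_neg]; ring
      rw [e]
      calc (-s)⁻¹ * (∫ τ in s * t₁..s * t₀, (Fp (x₁ + τ) - Fp (x₀ + τ)))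
          ≤ (-s)⁻¹ * ((s * t₀ - s * t₁) * J) := by nlinarith
        _ = (t₁ - t₀) * J := by rw [inv_neg]; field_simp; ring
    · have hord : s * t₀ ≤ s * t₁ := by nlinarith
      have hmono : (∫ τ in s * t₀..s * t₁, (Fp (x₁ + τ) - Fp (x₀ + τ)))
          ≤ (s * t₁ - s * t₀) * J := by
        have := intervalIntegral.integral_mono_on (μ := volume)
          (f := fun τ => Fp (x₁ + τ) - Fp (x₀ + τ))
          (g := fun _ => J) hord (hψcont.intervalIntegrable _ _) intervalIntegrable_const
          (fun τ hτ => (hψ τ (by rcases hτ with ⟨l, r⟩; simp; left; exact l)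
            (by rcases hτ with ⟨l, r⟩; simp; right; exact r)).2)
        rwa [intervalIntegral.integral_const, smul_eq_mul] at this
      have hnn : 0 ≤ ∫ τ in s * t₀..s * t₁, (Fp (x₁ + τ) - Fp (x₀ + τ)) :=
        intervalIntegral.integral_nonneg hord
          (fun τ hτ => (hψ τ (by rcases hτ with ⟨l, r⟩; simp; left; exact l)
            (by rcases hτ with ⟨l, r⟩; simp; right; exact r)).1)
      have hsinv : (0:ℝ) < s⁻¹ := by positivity
      calc s⁻¹ * (∫ τ in s * t₀..s * t₁, (Fp (x₁ + τ) - Fp (x₀ + τ)))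
          ≤ s⁻¹ * ((s * t₁ - s * t₀) * J) := by nlinarith
        _ = (t₁ - t₀) * J := by field_simp
  rcases min_cases (t₁ - t₀) ((x₁ - x₀) / |s|) with ⟨hmin, _⟩ | ⟨hmin, _⟩ <;> rw [hmin]
  · exact bound2
  · exact bound1

lemma contIntIoo {f : ℝ → ℝ} (hf : Continuous f) (a b : ℝ) :
    MeasureTheory.IntegrableOn f (Set.Ioo a b) volume :=
  (hf.integrableOn_Icc).mono_set Set.Ioo_subset_Icc_self

lemma integrableOn_param (F : ℝ → ℝ → ℝ) (hF : Continuous (Function.uncurry F))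
    (x₀ x₁ t₀ t₁ : ℝ) :
    MeasureTheory.IntegrableOn (fun x => ∫ t in Set.Ioo t₀ t₁, F x t) (Set.Ioo x₀ x₁) volume := by
  haveI : IsFiniteMeasure (volume.restrict (Set.Ioo t₀ t₁)) :=
    ⟨by rw [Measure.restrict_apply_univ]; exact measure_Ioo_lt_top⟩
  haveI : IsFiniteMeasure (volume.restrict (Set.Ioo x₀ x₁)) :=
    ⟨by rw [Measure.restrict_apply_univ]; exact measure_Ioo_lt_top⟩
  obtain ⟨C, hC⟩ := (isCompact_Icc.prod isCompact_Icc).exists_bound_of_continuousOn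
    (s := Set.Icc x₀ x₁ ×ˢ Set.Icc t₀ t₁) hF.continuousOn
  constructor
  · exact (hF.stronglyMeasurable.integral_prod_right).aestronglyMeasurable
  · apply MeasureTheory.HasFiniteIntegral.of_bounded
      (C := C * (volume.restrict (Set.Ioo t₀ t₁) Set.univ).toReal)
    refine ae_restrict_of_forall_mem measurableSet_Ioo ?_
    intro x hxm
    apply norm_integral_le_of_norm_le_const
    refine ae_restrict_of_forall_mem measurableSet_Ioo ?_
    intro t htm
    exact hC (x, t) ⟨Set.Ioo_subset_Icc_self hxm, Set.Ioo_subset_Icc_self htm⟩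

lemma sq_comb_le {a b X Y : ℝ} (ha : a ^ 2 ≤ 1 / 4) (hb : b ^ 2 ≤ 1 / 4) :
    (a * X + b * Y) ^ 2 ≤ (X ^ 2 + Y ^ 2) / 2 := by
  nlinarith [sq_nonneg (a * X - b * Y), sq_nonneg (a * X + b * Y), sq_nonneg X, sq_nonneg Y,
    mul_nonneg (sub_nonneg.mpr ha) (sq_nonneg X), mul_nonneg (sub_nonneg.mpr hb) (sq_nonneg Y)]

lemma elem_bound {x₀ x₁ t₀ t₁ c : ℝ} (hx : x₀ < x₁) (ht : t₀ < t₁) (hc : 0 < c)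
    {j : ℕ} {g h : ℝ → ℝ}
    (hg : ContDiffOn ℝ j g (Set.Icc (x₀ - c * t₁) (x₁ - c * t₀)))
    (hh : ContDiffOn ℝ j h (Set.Icc (x₀ + c * t₀) (x₁ + c * t₁)))
    {α β : ℝ} (hα : α ^ 2 ≤ 1 / 4) (hβ : β ^ 2 ≤ 1 / 4) :
    HjCsq c j (fun x t => α * g (x - c * t) + β * h (x + c * t)) x₀ x₁ t₀ t₁
      ≤ ((j : ℝ) + 1) * min (t₁ - t₀) ((x₁ - x₀) / c) *
        (((∫ z in Set.Ioo (x₀ - c * t₁) (x₁ - c * t₀), (iteratedDeriv j g z) ^ 2)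
          + ∫ z in Set.Ioo (x₀ + c * t₀) (x₁ + c * t₁), (iteratedDeriv j h z) ^ 2) / 2) := by
  have hab₁ : x₀ - c * t₁ < x₁ - c * t₀ := by nlinarith
  have hab₂ : x₀ + c * t₀ < x₁ + c * t₁ := by nlinarith
  set A₁ := x₀ - c * t₁ with hA₁
  set B₁ := x₁ - c * t₀ with hB₁
  set A₂ := x₀ + c * t₀ with hA₂
  set B₂ := x₁ + c * t₁ with hB₂
  -- continuous extensions of the j-th derivatives
  have hWg : ContinuousOn (iteratedDerivWithin j g (Set.Icc A₁ B₁)) (Set.Icc A₁ B₁) :=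
    hg.continuousOn_iteratedDerivWithin le_rfl (uniqueDiffOn_Icc hab₁)
  have hWh : ContinuousOn (iteratedDerivWithin j h (Set.Icc A₂ B₂)) (Set.Icc A₂ B₂) :=
    hh.continuousOn_iteratedDerivWithin le_rfl (uniqueDiffOn_Icc hab₂)
  set Eg : ℝ → ℝ := fun z => iteratedDerivWithin j g (Set.Icc A₁ B₁) (min (max z A₁) B₁)
    with hEgdef
  set Eh : ℝ → ℝ := fun z => iteratedDerivWithin j h (Set.Icc A₂ B₂) (min (max z A₂) B₂)
    with hEhdef
  have hclamp₁ : ∀ z : ℝ, min (max z A₁) B₁ ∈ Set.Icc A₁ B₁ :=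
    fun z => ⟨le_min (le_max_right _ _) hab₁.le, min_le_right _ _⟩
  have hclamp₂ : ∀ z : ℝ, min (max z A₂) B₂ ∈ Set.Icc A₂ B₂ :=
    fun z => ⟨le_min (le_max_right _ _) hab₂.le, min_le_right _ _⟩
  have hEgc : Continuous Eg :=
    hWg.comp_continuous ((continuous_id.max continuous_const).min continuous_const) hclamp₁
  have hEhc : Continuous Eh :=
    hWh.comp_continuous ((continuous_id.max continuous_const).min continuous_const) hclamp₂
  have hEg : ∀ z ∈ Set.Ioo A₁ B₁, Eg z = iteratedDeriv j g z := by
    intro z hz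
    show iteratedDerivWithin j g (Set.Icc A₁ B₁) (min (max z A₁) B₁) = _
    rw [max_eq_left hz.1.le, min_eq_left hz.2.le]
    exact itws g hz
  have hEh : ∀ z ∈ Set.Ioo A₂ B₂, Eh z = iteratedDeriv j h z := by
    intro z hz
    show iteratedDerivWithin j h (Set.Icc A₂ B₂) (min (max z A₂) B₂) = _
    rw [max_eq_left hz.1.le, min_eq_left hz.2.le]
    exact itws h hz
  set Jg := ∫ z in A₁..B₁, Eg z ^ 2 with hJgdef
  set Jh := ∫ z in A₂..B₂, Eh z ^ 2 with hJhdef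
  have hJg : (∫ z in Set.Ioo A₁ B₁, (iteratedDeriv j g z) ^ 2) = Jg := by
    rw [hJgdef, ← ioo_int _ hab₁.le]
    exact setIntegral_congr_fun measurableSet_Ioo (fun z hz => by rw [hEg z hz])
  have hJh : (∫ z in Set.Ioo A₂ B₂, (iteratedDeriv j h z) ^ 2) = Jh := by
    rw [hJhdef, ← ioo_int _ hab₂.le]
    exact setIntegral_congr_fun measurableSet_Ioo (fun z hz => by rw [hEh z hz])
  set mΔ := min (t₁ - t₀) ((x₁ - x₀) / c) with hmΔ
  -- the per-term bound
  have key : ∀ k ∈ Finset.range (j + 1),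
      (∫ x in x₀..x₁, ∫ t in t₀..t₁,
        (Dc c (j - k) k (fun x t => α * g (x - c * t) + β * h (x + c * t)) x t) ^ 2)
      ≤ mΔ * (Jg + Jh) / 2 := by
    intro k hk
    have hkj : k ≤ j := Nat.lt_succ_iff.mp (Finset.mem_range.mp hk)
    set Qk : ℝ → ℝ → ℝ := fun x t => α * (-1 : ℝ) ^ k * Eg (x - c * t) + β * Eh (x + c * t)
      with hQkdef
    have hQkc : Continuous (Function.uncurry Qk) := by
      apply Continuous.add
      · exact continuous_const.mul
          (hEgc.comp (continuous_fst.sub (continuous_const.mul continuous_snd)))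
      · exact continuous_const.mul
          (hEhc.comp (continuous_fst.add (continuous_const.mul continuous_snd)))
    have hDc : ∀ x ∈ Set.Ioo x₀ x₁, ∀ t ∈ Set.Ioo t₀ t₁,
        Dc c (j - k) k (fun x t => α * g (x - c * t) + β * h (x + c * t)) x t = Qk x t := by
      intro x hx' t ht'
      have hmem1 : x - c * t ∈ Set.Ioo A₁ B₁ :=
        ⟨by rw [hA₁]; nlinarith [hx'.1, ht'.2], by rw [hB₁]; nlinarith [hx'.2, ht'.1]⟩
      have hmem2 : x + c * t ∈ Set.Ioo A₂ B₂ :=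
        ⟨by rw [hA₂]; nlinarith [hx'.1, ht'.1], by rw [hB₂]; nlinarith [hx'.2, ht'.2]⟩
      have hdk := dk_formula hx ht hc hg hh α β (j - k) k (by omega) x hx' t ht'
      show (c ^ k)⁻¹ * pdX^[j - k] (pdT^[k]
        (fun x t => α * g (x - c * t) + β * h (x + c * t))) x t = Qk x t
      rw [hdk, Nat.sub_add_cancel hkj, ← hEg _ hmem1, ← hEh _ hmem2, hQkdef]
      have hck : (c : ℝ) ^ k ≠ 0 := pow_ne_zero _ hc.ne'
      rw [neg_pow]
      field_simp
    have hconv : (∫ x in x₀..x₁, ∫ t in t₀..t₁,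
        (Dc c (j - k) k (fun x t => α * g (x - c * t) + β * h (x + c * t)) x t) ^ 2)
        = ∫ x in Set.Ioo x₀ x₁, (∫ t in Set.Ioo t₀ t₁, (Qk x t) ^ 2) := by
      rw [← ioo_int _ hx.le]
      apply setIntegral_congr_fun measurableSet_Ioo
      intro x hx'
      show (∫ t in t₀..t₁,
          (Dc c (j - k) k (fun x t => α * g (x - c * t) + β * h (x + c * t)) x t) ^ 2)
        = ∫ t in Set.Ioo t₀ t₁, (Qk x t) ^ 2
      rw [← ioo_int _ ht.le]
      exact setIntegral_congr_fun measurableSet_Ioo (fun t ht' => by rw [hDc x hx' t ht'])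
    rw [hconv]
    set R : ℝ → ℝ → ℝ := fun x t => (Eg (x - c * t) ^ 2 + Eh (x + c * t) ^ 2) / 2 with hRdef
    have hRc : Continuous (Function.uncurry R) := by
      apply Continuous.div_const
      apply Continuous.add
      · exact (hEgc.comp (continuous_fst.sub (continuous_const.mul continuous_snd))).pow 2
      · exact (hEhc.comp (continuous_fst.add (continuous_const.mul continuous_snd))).pow 2
    have hque : ∀ x t : ℝ, (Qk x t) ^ 2 ≤ R x t := by
      intro x t
      have h1 : (α * (-1 : ℝ) ^ k) ^ 2 ≤ 1 / 4 := by
        rw [mul_pow, ← pow_mul, mul_comm k 2, pow_mul]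
        simpa using hα
      exact sq_comb_le h1 hβ
    have step2 : (∫ x in Set.Ioo x₀ x₁, (∫ t in Set.Ioo t₀ t₁, (Qk x t) ^ 2))
        ≤ ∫ x in Set.Ioo x₀ x₁, (∫ t in Set.Ioo t₀ t₁, R x t) := by
      apply setIntegral_mono_on
        (integrableOn_param (fun x t => (Qk x t) ^ 2) ((continuous_pow 2).comp hQkc) x₀ x₁ t₀ t₁)
        (integrableOn_param R hRc x₀ x₁ t₀ t₁) measurableSet_Ioo
      intro x _
      apply setIntegral_mono_on
        (contIntIoo (((hQkc.comp (Continuous.prodMk_right x)).pow 2)) t₀ t₁)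
        (contIntIoo (hRc.comp (Continuous.prodMk_right x)) t₀ t₁) measurableSet_Ioo
      intro t _
      exact hque x t
    have step3 : (∫ x in Set.Ioo x₀ x₁, (∫ t in Set.Ioo t₀ t₁, R x t))
        = ((∫ x in Set.Ioo x₀ x₁, (∫ t in Set.Ioo t₀ t₁, Eg (x - c * t) ^ 2))
          + ∫ x in Set.Ioo x₀ x₁, (∫ t in Set.Ioo t₀ t₁, Eh (x + c * t) ^ 2)) / 2 := by
      have inner : ∀ x : ℝ, (∫ t in Set.Ioo t₀ t₁, R x t)
          = ((∫ t in Set.Ioo t₀ t₁, Eg (x - c * t) ^ 2)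
            + ∫ t in Set.Ioo t₀ t₁, Eh (x + c * t) ^ 2) / 2 := by
        intro x
        have c1 : Continuous fun t : ℝ => Eg (x - c * t) ^ 2 :=
          (hEgc.comp (continuous_const.sub (continuous_const.mul continuous_id))).pow 2
        have c2 : Continuous fun t : ℝ => Eh (x + c * t) ^ 2 :=
          (hEhc.comp (continuous_const.add (continuous_const.mul continuous_id))).pow 2
        show (∫ t in Set.Ioo t₀ t₁, (Eg (x - c * t) ^ 2 + Eh (x + c * t) ^ 2) / 2) = _
        rw [integral_div, integral_add (contIntIoo c1 t₀ t₁) (contIntIoo c2 t₀ t₁)]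
      rw [show (fun x => ∫ t in Set.Ioo t₀ t₁, R x t)
        = fun x => ((∫ t in Set.Ioo t₀ t₁, Eg (x - c * t) ^ 2)
          + ∫ t in Set.Ioo t₀ t₁, Eh (x + c * t) ^ 2) / 2 from funext inner]
      have d1 : Continuous (Function.uncurry fun x t : ℝ => Eg (x - c * t) ^ 2) :=
        (hEgc.comp (continuous_fst.sub (continuous_const.mul continuous_snd))).pow 2
      have d2 : Continuous (Function.uncurry fun x t : ℝ => Eh (x + c * t) ^ 2) :=
        (hEhc.comp (continuous_fst.add (continuous_const.mul continuous_snd))).pow 2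
      rw [integral_div, integral_add
        (integrableOn_param (fun x t => Eg (x - c * t) ^ 2) d1 x₀ x₁ t₀ t₁)
        (integrableOn_param (fun x t => Eh (x + c * t) ^ 2) d2 x₀ x₁ t₀ t₁)]
    have s1 : (∫ x in Set.Ioo x₀ x₁, (∫ t in Set.Ioo t₀ t₁, Eg (x - c * t) ^ 2)) ≤ mΔ * Jg := by
      have hrange : ∀ x ∈ Set.Icc x₀ x₁, ∀ t ∈ Set.Icc t₀ t₁,
          x + (-c) * t ∈ Set.Icc A₁ B₁ := by
        intro x hx' t ht'
        constructor
        · rw [hA₁]; nlinarith [hx'.1, ht'.2]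
        · rw [hB₁]; nlinarith [hx'.2, ht'.1]
      have := int_shift_bound hx.le ht.le (neg_ne_zero.mpr hc.ne')
        (fun z => Eg z ^ 2) (hEgc.pow 2) (fun z => sq_nonneg _) hrange
      simp only [neg_mul, ← sub_eq_add_neg, abs_neg, abs_of_pos hc] at this
      exact this
    have s2 : (∫ x in Set.Ioo x₀ x₁, (∫ t in Set.Ioo t₀ t₁, Eh (x + c * t) ^ 2)) ≤ mΔ * Jh := by
      have hrange : ∀ x ∈ Set.Icc x₀ x₁, ∀ t ∈ Set.Icc t₀ t₁,
          x + c * t ∈ Set.Icc A₂ B₂ := by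
        intro x hx' t ht'
        constructor
        · rw [hA₂]; nlinarith [hx'.1, ht'.1]
        · rw [hB₂]; nlinarith [hx'.2, ht'.2]
      have := int_shift_bound hx.le ht.le hc.ne'
        (fun z => Eh z ^ 2) (hEhc.pow 2) (fun z => sq_nonneg _) hrange
      simp only [abs_of_pos hc] at this
      exact this
    calc (∫ x in Set.Ioo x₀ x₁, (∫ t in Set.Ioo t₀ t₁, (Qk x t) ^ 2))
        ≤ ∫ x in Set.Ioo x₀ x₁, (∫ t in Set.Ioo t₀ t₁, R x t) := step2
      _ = ((∫ x in Set.Ioo x₀ x₁, (∫ t in Set.Ioo t₀ t₁, Eg (x - c * t) ^ 2))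
          + ∫ x in Set.Ioo x₀ x₁, (∫ t in Set.Ioo t₀ t₁, Eh (x + c * t) ^ 2)) / 2 := step3
      _ ≤ (mΔ * Jg + mΔ * Jh) / 2 := by linarith
      _ = mΔ * (Jg + Jh) / 2 := by ring
  calc HjCsq c j (fun x t => α * g (x - c * t) + β * h (x + c * t)) x₀ x₁ t₀ t₁
      = ∑ k ∈ Finset.range (j + 1), ∫ x in x₀..x₁, ∫ t in t₀..t₁,
        (Dc c (j - k) k (fun x t => α * g (x - c * t) + β * h (x + c * t)) x t) ^ 2 := by
        simp only [HjCsq]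
    _ ≤ ∑ _k ∈ Finset.range (j + 1), mΔ * (Jg + Jh) / 2 := Finset.sum_le_sum key
    _ = ((j : ℝ) + 1) * (mΔ * (Jg + Jh) / 2) := by
        rw [Finset.sum_const, Finset.card_range, nsmul_eq_mul]
        push_cast
        ring
    _ = ((j : ℝ) + 1) * mΔ * (((∫ z in Set.Ioo A₁ B₁, (iteratedDeriv j g z) ^ 2)
          + ∫ z in Set.Ioo A₂ B₂, (iteratedDeriv j h z) ^ 2) / 2) := by
        rw [hJg, hJh]; ring

theorem stmt16 (x₀ x₁ t₀ t₁ ε μ c : ℝ) (hx : x₀ < x₁) (ht : t₀ < t₁)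
    (hε : 0 < ε) (hμ : 0 < μ) (hc : c = (Real.sqrt (ε * μ))⁻¹)
    (j p : ℕ) (u₀ w₀ : ℝ → ℝ)
    (hu₀ : ContDiffOn ℝ j u₀ (Set.Icc (x₀ - c * t₁) (x₁ - c * t₀)))
    (hw₀ : ContDiffOn ℝ j w₀ (Set.Icc (x₀ + c * t₀) (x₁ + c * t₁)))
    (φn φp : Fin (p + 1) → ℝ → ℝ)
    (hφn : ∀ k, ContDiffOn ℝ j (φn k) (Set.Icc (x₀ - c * t₁) (x₁ - c * t₀)))
    (hφp : ∀ k, ContDiffOn ℝ j (φp k) (Set.Icc (x₀ + c * t₀) (x₁ + c * t₁)))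
    (E H : ℝ → ℝ → ℝ)
    (hE : E = fun x t => (u₀ (x - c * t) + w₀ (x + c * t)) / (2 * Real.sqrt ε))
    (hH : H = fun x t => (u₀ (x - c * t) - w₀ (x + c * t)) / (2 * Real.sqrt μ))
    (Vp : Submodule ℝ ((ℝ → ℝ → ℝ) × (ℝ → ℝ → ℝ)))
    (hVp : Vp = Submodule.span ℝ
      (Set.range (fun k : Fin (p + 1) =>
        ((fun x t => φn k (x - c * t) / (2 * Real.sqrt ε)),
         (fun x t => φn k (x - c * t) / (2 * Real.sqrt μ)))) ∪
       Set.range (fun k : Fin (p + 1) =>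
        ((fun x t => φp k (x + c * t) / (2 * Real.sqrt ε)),
         (fun x t => - φp k (x + c * t) / (2 * Real.sqrt μ)))))) :
    sInf {r : ℝ | ∃ v ∈ Vp,
        r = HjCsq c j (fun x t => Real.sqrt ε * (E x t - v.1 x t)) x₀ x₁ t₀ t₁
          + HjCsq c j (fun x t => Real.sqrt μ * (H x t - v.2 x t)) x₀ x₁ t₀ t₁}
      ≤ (j + 1) * min (t₁ - t₀) ((x₁ - x₀) / c) *
        (sInf {r : ℝ | ∃ P ∈ Submodule.span ℝ (Set.range φn),
            r = ∫ z in Set.Ioo (x₀ - c * t₁) (x₁ - c * t₀),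
                  (iteratedDeriv j (fun y => u₀ y - P y) z) ^ 2}
          + sInf {r : ℝ | ∃ P ∈ Submodule.span ℝ (Set.range φp),
            r = ∫ z in Set.Ioo (x₀ + c * t₀) (x₁ + c * t₁),
                  (iteratedDeriv j (fun y => w₀ y - P y) z) ^ 2}) := by
  have hc0 : 0 < c := by
    rw [hc]; exact inv_pos.mpr (Real.sqrt_pos.mpr (mul_pos hε hμ))
  have hsε : Real.sqrt ε ≠ 0 := (Real.sqrt_pos.mpr hε).ne'
  have hsμ : Real.sqrt μ ≠ 0 := (Real.sqrt_pos.mpr hμ).ne'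
  set S : Set ℝ := {r : ℝ | ∃ v ∈ Vp,
      r = HjCsq c j (fun x t => Real.sqrt ε * (E x t - v.1 x t)) x₀ x₁ t₀ t₁
        + HjCsq c j (fun x t => Real.sqrt μ * (H x t - v.2 x t)) x₀ x₁ t₀ t₁} with hS
  set S₁ : Set ℝ := {r : ℝ | ∃ P ∈ Submodule.span ℝ (Set.range φn),
      r = ∫ z in Set.Ioo (x₀ - c * t₁) (x₁ - c * t₀),
        (iteratedDeriv j (fun y => u₀ y - P y) z) ^ 2} with hS₁
  set S₂ : Set ℝ := {r : ℝ | ∃ P ∈ Submodule.span ℝ (Set.range φp),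
      r = ∫ z in Set.Ioo (x₀ + c * t₀) (x₁ + c * t₁),
        (iteratedDeriv j (fun y => w₀ y - P y) z) ^ 2} with hS₂
  -- ContDiffOn for span elements
  have spanCD₁ : ∀ P ∈ Submodule.span ℝ (Set.range φn),
      ContDiffOn ℝ j P (Set.Icc (x₀ - c * t₁) (x₁ - c * t₀)) := by
    intro P hP
    induction hP using Submodule.span_induction with
    | mem y hy => obtain ⟨k, rfl⟩ := hy; exact hφn k
    | zero => exact contDiffOn_const
    | add f₁ f₂ h₁ h₂ ih₁ ih₂ => exact ih₁.add ih₂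
    | smul a f hf ihf => exact ihf.const_smul a
  have spanCD₂ : ∀ P ∈ Submodule.span ℝ (Set.range φp),
      ContDiffOn ℝ j P (Set.Icc (x₀ + c * t₀) (x₁ + c * t₁)) := by
    intro P hP
    induction hP using Submodule.span_induction with
    | mem y hy => obtain ⟨k, rfl⟩ := hy; exact hφp k
    | zero => exact contDiffOn_const
    | add f₁ f₂ h₁ h₂ ih₁ ih₂ => exact ih₁.add ih₂
    | smul a f hf ihf => exact ihf.const_smul a
  -- membership maps
  have m1 : ∀ P ∈ Submodule.span ℝ (Set.range φn),
      ((fun x t => P (x - c * t) / (2 * Real.sqrt ε)),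
       (fun x t => P (x - c * t) / (2 * Real.sqrt μ))) ∈ Vp := by
    intro P hP
    induction hP using Submodule.span_induction with
    | mem y hy =>
      obtain ⟨k, rfl⟩ := hy
      rw [hVp]
      exact Submodule.subset_span (Or.inl ⟨k, rfl⟩)
    | zero =>
      have e : ((fun x t => (0 : ℝ → ℝ) (x - c * t) / (2 * Real.sqrt ε)),
          (fun x t => (0 : ℝ → ℝ) (x - c * t) / (2 * Real.sqrt μ)))
          = (0 : (ℝ → ℝ → ℝ) × (ℝ → ℝ → ℝ)) := by
        refine Prod.ext ?_ ?_ <;> funext x t <;> simp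
      rw [e]; exact Vp.zero_mem
    | add f₁ f₂ h₁ h₂ ih₁ ih₂ =>
      have e : ((fun x t => (f₁ + f₂) (x - c * t) / (2 * Real.sqrt ε)),
          (fun x t => (f₁ + f₂) (x - c * t) / (2 * Real.sqrt μ)))
          = ((fun x t => f₁ (x - c * t) / (2 * Real.sqrt ε)),
             (fun x t => f₁ (x - c * t) / (2 * Real.sqrt μ)))
          + ((fun x t => f₂ (x - c * t) / (2 * Real.sqrt ε)),
             (fun x t => f₂ (x - c * t) / (2 * Real.sqrt μ))) := by
        refine Prod.ext ?_ ?_ <;> funext x t <;> simp [add_div]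
      rw [e]; exact Vp.add_mem ih₁ ih₂
    | smul a f hf ihf =>
      have e : ((fun x t => (a • f) (x - c * t) / (2 * Real.sqrt ε)),
          (fun x t => (a • f) (x - c * t) / (2 * Real.sqrt μ)))
          = a • ((fun x t => f (x - c * t) / (2 * Real.sqrt ε)),
             (fun x t => f (x - c * t) / (2 * Real.sqrt μ))) := by
        refine Prod.ext ?_ ?_ <;> funext x t <;>
          simp [Pi.smul_apply, smul_eq_mul, mul_div_assoc]
      rw [e]; exact Vp.smul_mem a ihf
  have m2 : ∀ P ∈ Submodule.span ℝ (Set.range φp),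
      ((fun x t => P (x + c * t) / (2 * Real.sqrt ε)),
       (fun x t => - P (x + c * t) / (2 * Real.sqrt μ))) ∈ Vp := by
    intro P hP
    induction hP using Submodule.span_induction with
    | mem y hy =>
      obtain ⟨k, rfl⟩ := hy
      rw [hVp]
      exact Submodule.subset_span (Or.inr ⟨k, rfl⟩)
    | zero =>
      have e : ((fun x t => (0 : ℝ → ℝ) (x + c * t) / (2 * Real.sqrt ε)),
          (fun x t => - (0 : ℝ → ℝ) (x + c * t) / (2 * Real.sqrt μ)))
          = (0 : (ℝ → ℝ → ℝ) × (ℝ → ℝ → ℝ)) := by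
        refine Prod.ext ?_ ?_ <;> funext x t <;> simp
      rw [e]; exact Vp.zero_mem
    | add f₁ f₂ h₁ h₂ ih₁ ih₂ =>
      have e : ((fun x t => (f₁ + f₂) (x + c * t) / (2 * Real.sqrt ε)),
          (fun x t => - (f₁ + f₂) (x + c * t) / (2 * Real.sqrt μ)))
          = ((fun x t => f₁ (x + c * t) / (2 * Real.sqrt ε)),
             (fun x t => - f₁ (x + c * t) / (2 * Real.sqrt μ)))
          + ((fun x t => f₂ (x + c * t) / (2 * Real.sqrt ε)),
             (fun x t => - f₂ (x + c * t) / (2 * Real.sqrt μ))) := by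
        refine Prod.ext ?_ ?_ <;> funext x t <;> simp [add_div] <;> ring
      rw [e]; exact Vp.add_mem ih₁ ih₂
    | smul a f hf ihf =>
      have e : ((fun x t => (a • f) (x + c * t) / (2 * Real.sqrt ε)),
          (fun x t => - (a • f) (x + c * t) / (2 * Real.sqrt μ)))
          = a • ((fun x t => f (x + c * t) / (2 * Real.sqrt ε)),
             (fun x t => - f (x + c * t) / (2 * Real.sqrt μ))) := by
        refine Prod.ext ?_ ?_ <;> funext x t <;>
          simp [Pi.smul_apply, smul_eq_mul, mul_div_assoc] <;> ring
      rw [e]; exact Vp.smul_mem a ihf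
  -- nonnegativity
  have hHjnn : ∀ v : ℝ → ℝ → ℝ, 0 ≤ HjCsq c j v x₀ x₁ t₀ t₁ := by
    intro v
    apply Finset.sum_nonneg
    intro k _
    apply intervalIntegral.integral_nonneg hx.le
    intro u _
    apply intervalIntegral.integral_nonneg ht.le
    intro s _
    positivity
  have hSbdd : BddBelow S := by
    refine ⟨0, ?_⟩
    rintro r ⟨v, _, rfl⟩
    exact add_nonneg (hHjnn _) (hHjnn _)
  have hS₁ne : S₁.Nonempty := ⟨_, 0, Submodule.zero_mem _, rfl⟩
  have hS₂ne : S₂.Nonempty := ⟨_, 0, Submodule.zero_mem _, rfl⟩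
  set C : ℝ := ((j : ℝ) + 1) * min (t₁ - t₀) ((x₁ - x₀) / c) with hCdef
  have hC : 0 < C := by
    apply mul_pos (by positivity)
    exact lt_min (by linarith) (div_pos (by linarith) hc0)
  show sInf S ≤ C * (sInf S₁ + sInf S₂)
  apply le_of_forall_pos_le_add
  intro δ hδ
  have hδC : 0 < δ / (2 * C) := div_pos hδ (by positivity)
  obtain ⟨r₁, hr₁S, hr₁lt⟩ := Real.lt_sInf_add_pos hS₁ne hδC
  obtain ⟨r₂, hr₂S, hr₂lt⟩ := Real.lt_sInf_add_pos hS₂ne hδC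
  obtain ⟨P₁, hP₁, hr₁eq⟩ := hr₁S
  obtain ⟨P₂, hP₂, hr₂eq⟩ := hr₂S
  have hgCD : ContDiffOn ℝ j (fun y => u₀ y - P₁ y)
      (Set.Icc (x₀ - c * t₁) (x₁ - c * t₀)) := hu₀.sub (spanCD₁ P₁ hP₁)
  have hhCD : ContDiffOn ℝ j (fun y => w₀ y - P₂ y)
      (Set.Icc (x₀ + c * t₀) (x₁ + c * t₁)) := hw₀.sub (spanCD₂ P₂ hP₂)
  set v : (ℝ → ℝ → ℝ) × (ℝ → ℝ → ℝ) :=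
    ((fun x t => P₁ (x - c * t) / (2 * Real.sqrt ε) + P₂ (x + c * t) / (2 * Real.sqrt ε)),
     (fun x t => P₁ (x - c * t) / (2 * Real.sqrt μ) + - P₂ (x + c * t) / (2 * Real.sqrt μ)))
    with hvdef
  have hvmem : v ∈ Vp := by
    have e : v = ((fun x t => P₁ (x - c * t) / (2 * Real.sqrt ε)),
        (fun x t => P₁ (x - c * t) / (2 * Real.sqrt μ)))
        + ((fun x t => P₂ (x + c * t) / (2 * Real.sqrt ε)),
           (fun x t => - P₂ (x + c * t) / (2 * Real.sqrt μ))) := by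
      refine Prod.ext ?_ ?_ <;> funext x t <;> simp [hvdef]
    rw [e]; exact Vp.add_mem (m1 P₁ hP₁) (m2 P₂ hP₂)
  have hfe : (fun x t => Real.sqrt ε * (E x t - v.1 x t))
      = fun x t => (1 / 2 : ℝ) * (fun y => u₀ y - P₁ y) (x - c * t)
        + (1 / 2 : ℝ) * (fun y => w₀ y - P₂ y) (x + c * t) := by
    funext x t
    rw [hE]
    show Real.sqrt ε * ((u₀ (x - c * t) + w₀ (x + c * t)) / (2 * Real.sqrt ε)
      - (P₁ (x - c * t) / (2 * Real.sqrt ε) + P₂ (x + c * t) / (2 * Real.sqrt ε))) = _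
    field_simp
    ring
  have hfh : (fun x t => Real.sqrt μ * (H x t - v.2 x t))
      = fun x t => (1 / 2 : ℝ) * (fun y => u₀ y - P₁ y) (x - c * t)
        + (-(1 / 2) : ℝ) * (fun y => w₀ y - P₂ y) (x + c * t) := by
    funext x t
    rw [hH]
    show Real.sqrt μ * ((u₀ (x - c * t) - w₀ (x + c * t)) / (2 * Real.sqrt μ)
      - (P₁ (x - c * t) / (2 * Real.sqrt μ) + - P₂ (x + c * t) / (2 * Real.sqrt μ))) = _
    field_simp
    ring
  have hb1 := elem_bound hx ht hc0 hgCD hhCD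
    (α := 1 / 2) (β := 1 / 2) (by norm_num) (by norm_num)
  have hb2 := elem_bound hx ht hc0 hgCD hhCD
    (α := 1 / 2) (β := -(1 / 2)) (by norm_num) (by norm_num)
  have hrS : (HjCsq c j (fun x t => Real.sqrt ε * (E x t - v.1 x t)) x₀ x₁ t₀ t₁
      + HjCsq c j (fun x t => Real.sqrt μ * (H x t - v.2 x t)) x₀ x₁ t₀ t₁) ∈ S :=
    ⟨v, hvmem, rfl⟩
  have hr_le : HjCsq c j (fun x t => Real.sqrt ε * (E x t - v.1 x t)) x₀ x₁ t₀ t₁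
      + HjCsq c j (fun x t => Real.sqrt μ * (H x t - v.2 x t)) x₀ x₁ t₀ t₁
      ≤ C * (r₁ + r₂) := by
    rw [hfe, hfh, hr₁eq, hr₂eq]
    calc _ ≤ _ + _ := add_le_add hb1 hb2
      _ = C * ((∫ z in Set.Ioo (x₀ - c * t₁) (x₁ - c * t₀),
            (iteratedDeriv j (fun y => u₀ y - P₁ y) z) ^ 2)
          + ∫ z in Set.Ioo (x₀ + c * t₀) (x₁ + c * t₁),
            (iteratedDeriv j (fun y => w₀ y - P₂ y) z) ^ 2) := by
        rw [hCdef]; ring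
  have hstep : sInf S ≤ C * (r₁ + r₂) := le_trans (csInf_le hSbdd hrS) hr_le
  have hCd : C * (δ / (2 * C)) = δ / 2 := by field_simp
  calc sInf S ≤ C * (r₁ + r₂) := hstep
    _ ≤ C * ((sInf S₁ + δ / (2 * C)) + (sInf S₂ + δ / (2 * C))) := by
        apply mul_le_mul_of_nonneg_left _ hC.le
        linarith
    _ = C * (sInf S₁ + sInf S₂) + δ := by
        have : C * ((sInf S₁ + δ / (2 * C)) + (sInf S₂ + δ / (2 * C)))
            = C * (sInf S₁ + sInf S₂) + 2 * (C * (δ / (2 * C))) := by ring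
        rw [this, hCd]; ring
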